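/- For the graded mesh t_j = T(j/M)^r with r ≥ 1 and 0 ≤ j ≤ M, the step sizes τ_j = t_j − t_{j−1} satisfy: the step ratios ρ_j = τ_j/τ_{j−1} are at least 1 and non-increasing in j for j ≥ 2, i.e. 1 ≤ ρ_{j+1} ≤ ρ_j for all j ≥ 2. -/

import Mathlib

open intervalIntegral MeasureTheory

private lemma grad_d_pos {s a : ℝ} (hs : 0 < s) (ha : 1 ≤ a) :
    0 < a ^ s - (a - 1) ^ s := by
  have := Real.rpow_lt_rpow (x := a - 1) (y := a) (by linarith) (by linarith) hs
  linarith

private lemma grad_int_eq {p : ℝ} (hp : 0 ≤ p) (a : ℝ) :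
    ∫ x in (a-1)..a, x ^ p = (a ^ (p+1) - (a-1) ^ (p+1)) / (p+1) := by
  rw [integral_rpow (Or.inl (by linarith))]

/-- The key inequalities for `d a = a^r - (a-1)^r`. -/
private lemma grad_key {r : ℝ} (hr : 1 ≤ r) {x : ℝ} (hx : 2 ≤ x) :
    x ^ r - (x-1) ^ r ≤ (x+1) ^ r - x ^ r ∧
    ((x+1) ^ r - x ^ r) * ((x-1) ^ r - (x-2) ^ r)
      ≤ (x ^ r - (x-1) ^ r) * (x ^ r - (x-1) ^ r) := by
  set p : ℝ := r - 1 with hp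
  have hp0 : 0 ≤ p := by linarith
  have hr0 : 0 < r := by linarith
  have hcont : Continuous (fun t : ℝ => t ^ p) := Real.continuous_rpow_const hp0
  -- the three integrals
  have hIx : ∫ t in (x-1)..x, t ^ p = (x ^ r - (x-1) ^ r) / r := by
    have := grad_int_eq hp0 x; rw [this]; norm_num [hp]
  have hIxp : ∫ t in (x-1)..x, (t+1) ^ p = ((x+1) ^ r - x ^ r) / r := by
    rw [integral_comp_add_right (fun t => t ^ p) 1]
    have := grad_int_eq hp0 (x+1)
    rw [show x - 1 + 1 = (x+1) - 1 by ring, this]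
    norm_num [hp]
  have hIxm : ∫ t in (x-1)..x, (t-1) ^ p = ((x-1) ^ r - (x-2) ^ r) / r := by
    rw [integral_comp_sub_right (fun t => t ^ p) 1]
    have h := grad_int_eq hp0 (x-1)
    rw [show x - 1 - 1 = x - 2 by ring] at h ⊢
    rw [h]; norm_num [hp]
  have hcont1 : Continuous fun t : ℝ => (t+1) ^ p := by
    exact hcont.comp (continuous_add_right 1)
  have hcont2 : Continuous fun t : ℝ => (t-1) ^ p := by
    exact hcont.comp (continuous_sub_right 1)
  set c : ℝ := (x / (x-1)) ^ p with hc
  have hx1 : (1:ℝ) ≤ x - 1 := by linarith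
  have hc0 : 0 ≤ c := Real.rpow_nonneg (by positivity) p
  -- d(x) ≤ d(x+1)
  have h1 : (∫ t in (x-1)..x, t ^ p) ≤ ∫ t in (x-1)..x, (t+1) ^ p := by
    apply intervalIntegral.integral_mono_on (by linarith)
      (hcont.intervalIntegrable _ _)
      (hcont1.intervalIntegrable _ _)
    intro t ht
    exact Real.rpow_le_rpow (by linarith [ht.1]) (by linarith) hp0
  -- d(x+1) ≤ c * d(x)
  have h2 : (∫ t in (x-1)..x, (t+1) ^ p) ≤ ∫ t in (x-1)..x, c * t ^ p := by
    apply intervalIntegral.integral_mono_on (by linarith)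
      (hcont1.intervalIntegrable _ _)
      ((continuous_const.mul hcont).intervalIntegrable _ _)
    intro t ht
    have ht1 : x - 1 ≤ t := ht.1
    have ht2 : t ≤ x := ht.2
    have : c * t ^ p = (x / (x-1) * t) ^ p := by
      rw [hc, ← Real.mul_rpow (by positivity) (by linarith)]
    show (t+1) ^ p ≤ c * t ^ p
    rw [this]
    apply Real.rpow_le_rpow (by linarith) _ hp0
    rw [div_mul_eq_mul_div, le_div_iff₀ (by linarith)]
    nlinarith
  -- c * d(x-1) ≤ d(x)
  have h3 : (∫ t in (x-1)..x, c * (t-1) ^ p) ≤ ∫ t in (x-1)..x, t ^ p := by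
    apply intervalIntegral.integral_mono_on (by linarith)
      ((continuous_const.mul hcont2).intervalIntegrable _ _)
      (hcont.intervalIntegrable _ _)
    intro t ht
    have ht1 : x - 1 ≤ t := ht.1
    have ht2 : t ≤ x := ht.2
    have : c * (t-1) ^ p = (x / (x-1) * (t-1)) ^ p := by
      rw [hc, ← Real.mul_rpow (by positivity) (by linarith)]
    show c * (t-1) ^ p ≤ t ^ p
    rw [this]
    apply Real.rpow_le_rpow (mul_nonneg (by positivity) (by linarith)) _ hp0
    rw [div_mul_eq_mul_div, div_le_iff₀ (by linarith)]
    nlinarith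
  rw [intervalIntegral.integral_const_mul] at h2 h3
  rw [hIx, hIxp] at h1
  rw [hIx, hIxp] at h2
  rw [hIx, hIxm] at h3
  have hrpos : (0:ℝ) < r := hr0
  constructor
  · have h1' := mul_le_mul_of_nonneg_right h1 (le_of_lt hrpos)
    rw [div_mul_cancel₀ _ (ne_of_gt hrpos), div_mul_cancel₀ _ (ne_of_gt hrpos)] at h1'
    exact h1' 
  · -- from h2 : d(x+1)/r ≤ c * (d x / r), h3 : c * (d(x-1)/r) ≤ d x / r
    have hdx : 0 < x ^ r - (x-1) ^ r := grad_d_pos (a := x) hr0 (by linarith)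
    have hdxm : 0 < (x-1) ^ r - (x-2) ^ r := by
      have := grad_d_pos (a := x-1) hr0 hx1
      rw [show x - 1 - 1 = x - 2 by ring] at this; exact this
    have h2' : (x+1) ^ r - x ^ r ≤ c * (x ^ r - (x-1) ^ r) := by
      have := mul_le_mul_of_nonneg_right h2 (le_of_lt hrpos)
      rw [div_mul_cancel₀ _ (ne_of_gt hrpos)] at this
      calc (x+1) ^ r - x ^ r ≤ c * ((x ^ r - (x-1) ^ r) / r) * r := this
        _ = c * (x ^ r - (x-1) ^ r) := by field_simp
    have h3' : c * ((x-1) ^ r - (x-2) ^ r) ≤ x ^ r - (x-1) ^ r := by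
      have := mul_le_mul_of_nonneg_right h3 (le_of_lt hrpos)
      rw [div_mul_cancel₀ _ (ne_of_gt hrpos)] at this
      calc c * ((x-1) ^ r - (x-2) ^ r) = c * (((x-1) ^ r - (x-2) ^ r) / r) * r := by
            field_simp
        _ ≤ x ^ r - (x-1) ^ r := this
    nlinarith

theorem graded_mesh_step_ratios (T r : ℝ) (hT : 0 < T) (hr : 1 ≤ r) (M : ℕ) (hM : 2 ≤ M)
    (t τ ρ : ℕ → ℝ)
    (ht : ∀ j, t j = T * ((j : ℝ) / (M : ℝ)) ^ r)
    (hτ : ∀ j, 1 ≤ j → τ j = t j - t (j - 1))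
    (hρ : ∀ j, 2 ≤ j → ρ j = τ j / τ (j - 1)) :
    ∀ j, 2 ≤ j → j + 1 ≤ M → 1 ≤ ρ (j + 1) ∧ ρ (j + 1) ≤ ρ j := by
  intro j hj hjM
  have hr0 : (0:ℝ) < r := by linarith
  have hM0 : (0:ℝ) < (M:ℝ) := by exact_mod_cast (by omega : 0 < M)
  set C : ℝ := T / (M:ℝ) ^ r with hC
  have hC0 : 0 < C := by positivity
  -- t as C * k^r
  have ht' : ∀ k : ℕ, t k = C * (k:ℝ) ^ r := by
    intro k
    rw [ht k, Real.div_rpow (Nat.cast_nonneg k) (le_of_lt hM0), hC]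
    ring
  -- τ k = C * (k^r - (k-1)^r) for k ≥ 1
  have hτ' : ∀ k : ℕ, 1 ≤ k → τ k = C * ((k:ℝ) ^ r - ((k:ℝ) - 1) ^ r) := by
    intro k hk
    rw [hτ k hk, ht', ht']
    have : ((k - 1 : ℕ) : ℝ) = (k:ℝ) - 1 := by
      have := Nat.cast_sub hk (R := ℝ); simpa using this
    rw [this]; ring
  set x : ℝ := (j:ℝ) with hxdef
  have hx2 : (2:ℝ) ≤ x := by rw [hxdef]; exact_mod_cast hj
  have hdx : 0 < x ^ r - (x-1) ^ r := grad_d_pos (a := x) hr0 (by linarith)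
  have hdxm : 0 < (x-1) ^ r - (x-2) ^ r := by
    have := grad_d_pos (a := x-1) hr0 (by linarith)
    rw [show x - 1 - 1 = x - 2 by ring] at this; exact this
  have hdxp : 0 < (x+1) ^ r - x ^ r := by
    have := grad_d_pos (a := x+1) hr0 (by linarith)
    rw [show x + 1 - 1 = x by ring] at this; exact this
  obtain ⟨h1, h2⟩ := grad_key hr hx2
  -- compute the taus
  have hτj : τ j = C * (x ^ r - (x-1) ^ r) := hτ' j (by omega)
  have hτjp : τ (j+1) = C * ((x+1) ^ r - x ^ r) := by
    rw [hτ' (j+1) (by omega)]; push_cast; ring_nf; rw [hxdef]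
  have hτjm : τ (j-1) = C * ((x-1) ^ r - (x-2) ^ r) := by
    rw [hτ' (j-1) (by omega)]
    have h1 : ((j - 1 : ℕ) : ℝ) = x - 1 := by
      have := Nat.cast_sub (by omega : 1 ≤ j) (R := ℝ); simpa [hxdef] using this
    rw [h1]; ring_nf
  have hρjp : ρ (j+1) = ((x+1) ^ r - x ^ r) / (x ^ r - (x-1) ^ r) := by
    rw [hρ (j+1) (by omega)]
    have : j + 1 - 1 = j := by omega
    rw [this, hτjp, hτj, mul_div_mul_left _ _ (ne_of_gt hC0)]
  have hρj : ρ j = (x ^ r - (x-1) ^ r) / ((x-1) ^ r - (x-2) ^ r) := by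
    rw [hρ j (by omega), hτj, hτjm, mul_div_mul_left _ _ (ne_of_gt hC0)]
  constructor
  · rw [hρjp, le_div_iff₀ hdx]; linarith
  · rw [hρjp, hρj, div_le_div_iff₀ hdx hdxm]
    nlinarith
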